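/- arXiv:2309.08808 — 2 statements merged into one kernel-verified Lean document; each statement's English description precedes it below -/
import Mathlib

section
/- Let T > 0 be a real number and let σ(1), σ(0) ≥ 0 be real numbers, not both zero. Define V(T₁, T₀) = σ(1)²/T₁ + σ(0)²/T₀ for T₁, T₀ > 0, and define the clairvoyant optimum V* = (σ(1) + σ(0))²/T. Then: (i) for the half–half allocation T₁ = T₀ = T/2, for every admissible pair (σ(1), σ(0)) one has V(T/2, T/2)/V* ≤ 2, with equality whenever σ(1) = 0 or σ(0) = 0, so the supremum over (σ(1), σ(0)) of V(T/2, T/2)/V* equals 2; and (ii) for any allocation T₁, T₀ > 0 with T₁ + T₀ = T and T₁ ≠ T/2, the supremum over (σ(1), σ(0)) not both zero of V(T₁, T₀)/V* equals max{T/T₁, T/T₀} > 2. Consequently T₁ = T₀ = T/2 is the unique minimizer of the worst-case ratio. -/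
lemma neyman_aux (T T1 T0 σ1 σ0 M : ℝ) (hT : 0 < T) (hT1 : 0 < T1) (hT0 : 0 < T0)
    (h1 : 0 ≤ σ1) (h0 : 0 ≤ σ0) (hs : 0 < σ1 + σ0)
    (hM1 : T ≤ M * T1) (hM0 : T ≤ M * T0) :
    (σ1 ^ 2 / T1 + σ0 ^ 2 / T0) / ((σ1 + σ0) ^ 2 / T) ≤ M := by
  rw [div_le_iff₀ (by positivity), div_add_div _ _ hT1.ne' hT0.ne',
    div_le_iff₀ (by positivity)]
  have heq : M * ((σ1 + σ0) ^ 2 / T) * (T1 * T0) = M * (σ1 + σ0) ^ 2 * T1 * T0 / T := by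
    ring
  rw [heq, le_div_iff₀ hT]
  have e1 : 0 ≤ σ1 ^ 2 * T0 * (M * T1 - T) :=
    mul_nonneg (mul_nonneg (sq_nonneg σ1) hT0.le) (by linarith)
  have e0 : 0 ≤ σ0 ^ 2 * T1 * (M * T0 - T) :=
    mul_nonneg (mul_nonneg (sq_nonneg σ0) hT1.le) (by linarith)
  have e2 : 0 ≤ M * T1 * T0 * (σ1 * σ0) := by
    have hM : 0 < M := by nlinarith
    positivity
  nlinarith [e1, e0, e2]

/-- Single-stage Neyman allocation: the half–half allocation is the unique
minimizer of the worst-case ratio of the proxy mean squared error to the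
clairvoyant optimum. -/
theorem single_stage_neyman_allocation (T : ℝ) (hT : 0 < T) :
    (∀ σ1 σ0 : ℝ, 0 ≤ σ1 → 0 ≤ σ0 → 0 < σ1 + σ0 →
        (σ1 ^ 2 / (T / 2) + σ0 ^ 2 / (T / 2)) / ((σ1 + σ0) ^ 2 / T) ≤ 2) ∧
    (∀ σ1 σ0 : ℝ, 0 ≤ σ1 → 0 ≤ σ0 → 0 < σ1 + σ0 → (σ1 = 0 ∨ σ0 = 0) →
        (σ1 ^ 2 / (T / 2) + σ0 ^ 2 / (T / 2)) / ((σ1 + σ0) ^ 2 / T) = 2) ∧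
    IsLUB {r : ℝ | ∃ σ1 σ0 : ℝ, 0 ≤ σ1 ∧ 0 ≤ σ0 ∧ 0 < σ1 + σ0 ∧
        r = (σ1 ^ 2 / (T / 2) + σ0 ^ 2 / (T / 2)) / ((σ1 + σ0) ^ 2 / T)} 2 ∧
    (∀ T1 T0 : ℝ, 0 < T1 → 0 < T0 → T1 + T0 = T → T1 ≠ T / 2 →
        IsLUB {r : ℝ | ∃ σ1 σ0 : ℝ, 0 ≤ σ1 ∧ 0 ≤ σ0 ∧ 0 < σ1 + σ0 ∧
            r = (σ1 ^ 2 / T1 + σ0 ^ 2 / T0) / ((σ1 + σ0) ^ 2 / T)}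
          (max (T / T1) (T / T0)) ∧
        2 < max (T / T1) (T / T0)) := by
  have hT2 : (0:ℝ) < T / 2 := by linarith
  have part1 : ∀ σ1 σ0 : ℝ, 0 ≤ σ1 → 0 ≤ σ0 → 0 < σ1 + σ0 →
      (σ1 ^ 2 / (T / 2) + σ0 ^ 2 / (T / 2)) / ((σ1 + σ0) ^ 2 / T) ≤ 2 := by
    intro σ1 σ0 h1 h0 hs
    exact neyman_aux T (T/2) (T/2) σ1 σ0 2 hT hT2 hT2 h1 h0 hs (by linarith) (by linarith)
  have part2 : ∀ σ1 σ0 : ℝ, 0 ≤ σ1 → 0 ≤ σ0 → 0 < σ1 + σ0 → (σ1 = 0 ∨ σ0 = 0) →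
      (σ1 ^ 2 / (T / 2) + σ0 ^ 2 / (T / 2)) / ((σ1 + σ0) ^ 2 / T) = 2 := by
    intro σ1 σ0 h1 h0 hs hcase
    rcases hcase with rfl | rfl
    · have hσ0 : σ0 ≠ 0 := by intro h; rw [h] at hs; simp at hs
      field_simp
      ring
    · have hσ1 : σ1 ≠ 0 := by intro h; rw [h] at hs; simp at hs
      field_simp
      ring
  refine ⟨part1, part2, ?_, ?_⟩
  · constructor
    · rintro r ⟨σ1, σ0, h1, h0, hs, rfl⟩
      exact part1 σ1 σ0 h1 h0 hs
    · intro b hb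
      have : (2:ℝ) ∈ {r : ℝ | ∃ σ1 σ0 : ℝ, 0 ≤ σ1 ∧ 0 ≤ σ0 ∧ 0 < σ1 + σ0 ∧
          r = (σ1 ^ 2 / (T / 2) + σ0 ^ 2 / (T / 2)) / ((σ1 + σ0) ^ 2 / T)} := by
        exact ⟨1, 0, zero_le_one, le_refl 0, by norm_num,
          (part2 1 0 zero_le_one (le_refl 0) (by norm_num) (Or.inr rfl)).symm⟩
      exact hb this
  · intro T1 T0 hT1 hT0 hsum hne
    set M := max (T / T1) (T / T0) with hM
    have hM1 : T ≤ M * T1 := by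
      have := le_max_left (T / T1) (T / T0)
      rw [div_le_iff₀ hT1] at this
      linarith
    have hM0 : T ≤ M * T0 := by
      have := le_max_right (T / T1) (T / T0)
      rw [div_le_iff₀ hT0] at this
      linarith
    constructor
    · constructor
      · rintro r ⟨σ1, σ0, h1, h0, hs, rfl⟩
        exact neyman_aux T T1 T0 σ1 σ0 M hT hT1 hT0 h1 h0 hs hM1 hM0
      · intro b hb
        rcases le_total (T / T1) (T / T0) with hle | hle
        · have hmax : M = T / T0 := max_eq_right hle
          rw [hmax]
          apply hb
          refine ⟨0, 1, le_refl 0, zero_le_one, by norm_num, ?_⟩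
          field_simp
          ring
        · have hmax : M = T / T1 := max_eq_left hle
          rw [hmax]
          apply hb
          refine ⟨1, 0, zero_le_one, le_refl 0, by norm_num, ?_⟩
          field_simp
          ring
    · rcases lt_or_gt_of_ne hne with hlt | hgt
      · have : 2 < T / T1 := by rw [lt_div_iff₀ hT1]; linarith
        exact lt_of_lt_of_le this (le_max_left _ _)
      · have hT0' : T0 < T / 2 := by linarith
        have : 2 < T / T0 := by rw [lt_div_iff₀ hT0]; linarith
        exact lt_of_lt_of_le this (le_max_right _ _)
end

section
/- Let n ≥ 3 be an integer and let Y₁, …, Yₙ be independent, identically distributed real-valued random variables, each distributed as a random variable Y with finite fourth moment and variance σ² > 0. Let κ = E[(Y − E[Y])⁴]/σ⁴ and let σ̂² = (1/(n−1))·Σᵢ₌₁ⁿ (Yᵢ − (1/n)Σⱼ₌₁ⁿ Yⱼ)² be the sample variance estimator. Then for every δ > 0, P(|σ̂² − σ²| ≥ δ) ≤ κ·σ⁴/(δ²·n). -/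
open MeasureTheory ProbabilityTheory
open scoped ENNReal

section Helpers
variable {Ω : Type*} [MeasurableSpace Ω] {μ : Measure Ω} [IsProbabilityMeasure μ]

lemma memLp_two_mul {f g : Ω → ℝ} (hf : MemLp f 4 μ) (hg : MemLp g 4 μ) :
    MemLp (fun ω => f ω * g ω) 2 μ := by
  have h : (1:ℝ≥0∞)/2 = 1/4 + 1/4 := by
    rw [ENNReal.div_add_div_same, ENNReal.div_eq_div_iff] <;> norm_num
  have : ENNReal.HolderTriple 4 4 2 := ⟨by simpa only [one_div] using h.symm⟩
  exact hg.smul hf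

lemma integrable_mul_L2 {f g : Ω → ℝ} (hf : MemLp f 2 μ) (hg : MemLp g 2 μ) :
    Integrable (fun ω => f ω * g ω) μ := by
  have h : (1:ℝ≥0∞)/1 = 1/2 + 1/2 := by
    rw [ENNReal.div_add_div_same, ENNReal.div_eq_div_iff] <;> norm_num
  have : ENNReal.HolderTriple 2 2 1 := ⟨by simpa only [one_div] using h.symm⟩
  exact (hg.smul hf).integrable le_rfl

lemma memLp_two_of_four {f : Ω → ℝ} (hf : MemLp f 4 μ) : MemLp f 2 μ :=
  hf.mono_exponent (by norm_num)
end Helpers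

section Helpers2
variable {Ω : Type*} [MeasurableSpace Ω] {μ : Measure Ω} [IsProbabilityMeasure μ]

lemma integrable_monomial {f g : Ω → ℝ} (hf : MemLp f 4 μ) (hg : MemLp g 4 μ)
    (p q : ℕ) (hpq : p + q ≤ 4) :
    Integrable (fun ω => f ω ^ p * g ω ^ q) μ := by
  have M0 : MemLp (fun _ : Ω => (1:ℝ)) 2 μ := memLp_const 1
  have Mf : MemLp f 2 μ := memLp_two_of_four hf
  have Mg : MemLp g 2 μ := memLp_two_of_four hg
  have Mff := memLp_two_mul hf hf
  have Mfg := memLp_two_mul hf hg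
  have Mgg := memLp_two_mul hg hg
  have hp : p ≤ 4 := by omega
  have hq : q ≤ 4 := by omega
  interval_cases p <;> interval_cases q <;>
  first
    | (exfalso; omega)
    | (refine (integrable_mul_L2 M0 M0).congr (Filter.Eventually.of_forall fun ω => ?_); ring1)
    | (refine (integrable_mul_L2 M0 Mf).congr (Filter.Eventually.of_forall fun ω => ?_); ring1)
    | (refine (integrable_mul_L2 M0 Mg).congr (Filter.Eventually.of_forall fun ω => ?_); ring1)
    | (refine (integrable_mul_L2 Mf Mg).congr (Filter.Eventually.of_forall fun ω => ?_); ring1)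
    | (refine (integrable_mul_L2 Mf Mf).congr (Filter.Eventually.of_forall fun ω => ?_); ring1)
    | (refine (integrable_mul_L2 Mg Mg).congr (Filter.Eventually.of_forall fun ω => ?_); ring1)
    | (refine (integrable_mul_L2 Mff Mg).congr (Filter.Eventually.of_forall fun ω => ?_); ring1)
    | (refine (integrable_mul_L2 Mf Mgg).congr (Filter.Eventually.of_forall fun ω => ?_); ring1)
    | (refine (integrable_mul_L2 Mff Mgg).congr (Filter.Eventually.of_forall fun ω => ?_); ring1)
    | (refine (integrable_mul_L2 Mf Mff).congr (Filter.Eventually.of_forall fun ω => ?_); ring1)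
    | (refine (integrable_mul_L2 Mg Mgg).congr (Filter.Eventually.of_forall fun ω => ?_); ring1)
    | (refine (integrable_mul_L2 Mff Mfg).congr (Filter.Eventually.of_forall fun ω => ?_); ring1)
    | (refine (integrable_mul_L2 Mfg Mgg).congr (Filter.Eventually.of_forall fun ω => ?_); ring1)
    | (refine (integrable_mul_L2 Mff Mff).congr (Filter.Eventually.of_forall fun ω => ?_); ring1)
    | (refine (integrable_mul_L2 Mgg Mgg).congr (Filter.Eventually.of_forall fun ω => ?_); ring1)
end Helpers2

section Moments
variable {Ω : Type*} [MeasurableSpace Ω] {μ : Measure Ω} [IsProbabilityMeasure μ]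

lemma iid_sum_moments {n : ℕ} (X : Fin n → Ω → ℝ) (hmeas : ∀ i, Measurable (X i))
    (hindep : iIndepFun X μ)
    (hX4 : ∀ i, MemLp (X i) 4 μ)
    (s2 c3 k4 : ℝ)
    (h1 : ∀ i, ∫ ω, X i ω ∂μ = 0)
    (h2 : ∀ i, ∫ ω, (X i ω)^2 ∂μ = s2)
    (h3 : ∀ i, ∫ ω, (X i ω)^3 ∂μ = c3)
    (h4 : ∀ i, ∫ ω, (X i ω)^4 ∂μ = k4)
    (s : Finset (Fin n)) :
    (∫ ω, (∑ i ∈ s, X i) ω ∂μ = 0) ∧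
    (∫ ω, ((∑ i ∈ s, X i) ω)^2 ∂μ = s.card * s2) ∧
    (∫ ω, ((∑ i ∈ s, X i) ω)^3 ∂μ = s.card * c3) ∧
    (∫ ω, ((∑ i ∈ s, X i) ω)^4 ∂μ = s.card * k4 + 3*s.card*(s.card - 1)*s2^2) := by
  classical
  induction s using Finset.induction_on with
  | empty => simp
  | @insert a s ha IH =>
    have hBfun : (∑ i ∈ s, X i) = fun ω => ∑ i ∈ s, X i ω := funext fun ω => Finset.sum_apply _ _ _
    have hBmeas : Measurable (∑ i ∈ s, X i) := by
      rw [hBfun]; exact Finset.measurable_sum s fun i _ => hmeas i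
    have hB4 : MemLp (∑ i ∈ s, X i) 4 μ := memLp_finset_sum' s fun i _ => hX4 i
    set B := ∑ i ∈ s, X i with hBdef
    obtain ⟨IH1, IH2, IH3, IH4⟩ := IH
    have hA4 := hX4 a
    have hind : IndepFun B (X a) μ := hindep.indepFun_finset_sum_of_notMem hmeas ha
    have Im : ∀ p q : ℕ, p + q ≤ 4 → Integrable (fun ω => X a ω ^ p * B ω ^ q) μ :=
      fun p q h => integrable_monomial hA4 hB4 p q h
    have hprod : ∀ p q : ℕ, ∫ ω, X a ω ^ p * B ω ^ q ∂μ
        = (∫ ω, X a ω ^ p ∂μ) * ∫ ω, B ω ^ q ∂μ := by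
      intro p q
      have h := (hind.symm.comp (measurable_id.pow_const p)
          (measurable_id.pow_const q)).integral_mul_eq_mul_integral
        ((hmeas a).pow_const p).aestronglyMeasurable (hBmeas.pow_const q).aestronglyMeasurable
      simpa [Function.comp] using h
    have hsum : (∑ i ∈ insert a s, X i) = X a + B := Finset.sum_insert ha
    have hcard : (((insert a s).card : ℕ) : ℝ) = (s.card : ℝ) + 1 := by
      rw [Finset.card_insert_of_notMem ha]; push_cast; ring
    have expand : ∀ k : ℕ, k ≤ 4 → ∫ ω, (X a ω + B ω) ^ k ∂μ
        = ∑ m ∈ Finset.range (k+1), (∫ ω, X a ω ^ m * B ω ^ (k - m) ∂μ) * (k.choose m : ℝ) := by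
      intro k hk
      have e1 : ∫ ω, (X a ω + B ω) ^ k ∂μ
          = ∫ ω, ∑ m ∈ Finset.range (k+1), X a ω ^ m * B ω ^ (k - m) * (k.choose m : ℝ) ∂μ :=
        integral_congr_ae (Filter.Eventually.of_forall fun ω => add_pow _ _ _)
      rw [e1, integral_finset_sum _ fun m hm => ((Im m (k - m) (by
          have := Finset.mem_range.mp hm; omega)).mul_const _)]
      exact Finset.sum_congr rfl fun m _ => integral_mul_const _ _
    refine ⟨?_, ?_, ?_, ?_⟩
    · rw [hsum]; simp only [Pi.add_apply]
      rw [integral_add (hA4.integrable (by norm_num)) (hB4.integrable (by norm_num)),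
        h1 a, IH1]
      norm_num
    · rw [hsum]; simp only [Pi.add_apply]
      rw [expand 2 (by norm_num)]
      simp [Finset.sum_range_succ, hprod, h1 a, h2 a, IH1, IH2,
        Finset.card_insert_of_notMem ha]
      try push_cast
      try ring
    · rw [hsum]; simp only [Pi.add_apply]
      rw [expand 3 (by norm_num)]
      simp [Finset.sum_range_succ, hprod, h1 a, h2 a, h3 a, IH1, IH2, IH3,
        Finset.card_insert_of_notMem ha]
      try push_cast
      try ring
    · rw [hsum]; simp only [Pi.add_apply]
      rw [expand 4 (by norm_num)]
      simp [Finset.sum_range_succ, hprod, h1 a, h2 a, h3 a, h4 a, IH1, IH2, IH3, IH4, show Nat.choose 4 2 = 6 from rfl,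
        Finset.card_insert_of_notMem ha]
      try push_cast
      try ring
end Moments

set_option maxHeartbeats 1000000 in
/-- Paper's Lemma `LightTail`: a Chebyshev-type concentration bound for the
sample variance estimator of `n ≥ 3` i.i.d. random variables in terms of the
kurtosis `κ = E[(Y − E Y)⁴] / σ⁴`. -/
theorem sample_variance_light_tail
    {Ω : Type*} [MeasurableSpace Ω] (μ : Measure Ω) [IsProbabilityMeasure μ]
    (n : ℕ) (hn : 3 ≤ n) (Y : Fin n → Ω → ℝ) (Y0 : Ω → ℝ)
    (hmeas : ∀ i, Measurable (Y i)) (hmeas0 : Measurable Y0)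
    (hindep : iIndepFun Y μ)
    (hident : ∀ i, IdentDistrib (Y i) Y0 μ μ)
    (hmom : MemLp Y0 4 μ)
    (hvar : 0 < variance Y0 μ)
    (κ : ℝ) (hκ : κ = (∫ ω, (Y0 ω - ∫ ω', Y0 ω' ∂μ) ^ 4 ∂μ) / (variance Y0 μ) ^ 2)
    (δ : ℝ) (hδ : 0 < δ) :
    μ {ω | δ ≤ |(1 / ((n : ℝ) - 1)) *
        (∑ i, (Y i ω - (1 / (n : ℝ)) * ∑ j, Y j ω) ^ 2) - variance Y0 μ|} ≤
      ENNReal.ofReal (κ * (variance Y0 μ) ^ 2 / (δ ^ 2 * (n : ℝ))) := by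
  classical
  have hn3 : (3:ℝ) ≤ (n:ℝ) := by exact_mod_cast hn
  have hnpos : (0:ℝ) < n := by linarith
  have hn0 : (n:ℝ) ≠ 0 := ne_of_gt hnpos
  have hn1 : (n:ℝ) - 1 ≠ 0 := ne_of_gt (by linarith)
  set m : ℝ := ∫ ω', Y0 ω' ∂μ with hm
  set s2 : ℝ := variance Y0 μ with hs2
  set X : Fin n → Ω → ℝ := fun i => (fun y => y - m) ∘ Y i with hXdef
  set X0 : Ω → ℝ := (fun y => y - m) ∘ Y0 with hX0def
  have hmeasX : ∀ i, Measurable (X i) := fun i => (hmeas i).sub_const m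
  have hX0mem : MemLp X0 4 μ := hmom.sub (memLp_const m)
  have hidX : ∀ i, IdentDistrib (X i) X0 μ μ := fun i =>
    (hident i).comp (measurable_id.sub_const m)
  have hindX : iIndepFun X μ :=
    hindep.comp (fun _ y => y - m) (fun _ => measurable_id.sub_const m)
  have hX4 : ∀ i, MemLp (X i) 4 μ := fun i => (hidX i).symm.memLp_snd hX0mem
  have hint0 : Integrable Y0 μ := hmom.integrable (by norm_num)
  have hEX0 : ∫ ω, X0 ω ∂μ = 0 := by
    rw [hX0def]
    simp only [Function.comp_apply]
    rw [integral_sub hint0 (integrable_const m), integral_const, probReal_univ]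
    simp only [ENNReal.toReal_one, one_smul]
    rw [← hm, sub_self]
  have hmom2 : MemLp Y0 2 μ := hmom.mono_exponent (by norm_num)
  have hEX0sq : ∫ ω, (X0 ω)^2 ∂μ = s2 := by
    rw [hs2, variance_eq_integral hmeas0.aemeasurable]
    refine integral_congr_ae (Filter.Eventually.of_forall fun ω => ?_)
    simp [hX0def, ← hm]
  have hml : ∀ (p : ℕ) (i : Fin n), ∫ ω, (X i ω)^p ∂μ = ∫ ω, (X0 ω)^p ∂μ := fun p i =>
    ((hidX i).comp (measurable_id.pow_const p)).integral_eq
  set c3 : ℝ := ∫ ω, (X0 ω)^3 ∂μ with hc3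
  set k4 : ℝ := ∫ ω, (X0 ω)^4 ∂μ with hk4
  have hs2pos : 0 < s2 := hvar
  have hk4' : ∫ ω, (Y0 ω - m)^4 ∂μ = k4 := by
    rw [hk4]
    exact integral_congr_ae (Filter.Eventually.of_forall fun ω => by simp [hX0def])
  have hκk : κ * s2^2 = k4 := by
    rw [hκ, hk4']
    field_simp
  have h1 : ∀ i, ∫ ω, X i ω ∂μ = 0 := fun i => by
    have := hml 1 i
    simp only [pow_one] at this
    rw [this, hEX0]
  have h2 : ∀ i, ∫ ω, (X i ω)^2 ∂μ = s2 := fun i => (hml 2 i).trans hEX0sq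
  have h3 : ∀ i, ∫ ω, (X i ω)^3 ∂μ = c3 := fun i => (hml 3 i).trans hc3.symm
  have h4 : ∀ i, ∫ ω, (X i ω)^4 ∂μ = k4 := fun i => (hml 4 i).trans hk4.symm
  have hmoms := iid_sum_moments X hmeasX hindX hX4 s2 c3 k4 h1 h2 h3 h4
  obtain ⟨hTm1, hTm2, hTm3, hTm4⟩ := hmoms Finset.univ
  set T : Ω → ℝ := ∑ i, X i with hT
  have hTmem : MemLp T 4 μ := memLp_finset_sum' _ (fun i _ => hX4 i)
  have hTapp : ∀ ω, T ω = ∑ i, X i ω := fun ω => by rw [hT]; exact Finset.sum_apply _ _ _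
  have hcardU : ((Finset.univ : Finset (Fin n)).card : ℝ) = n := by simp
  set QP : Ω → ℝ := ∑ i, (fun ω => X i ω * X i ω) with hQP
  have hQapp : ∀ ω, QP ω = ∑ i, X i ω * X i ω := fun ω => by
    rw [hQP]; exact Finset.sum_apply _ _ _
  have hQmem : MemLp QP 2 μ := memLp_finset_sum' _ (fun i _ => memLp_two_mul (hX4 i) (hX4 i))
  have hT2mem : MemLp (fun ω => T ω * T ω) 2 μ := memLp_two_mul hTmem hTmem
  have intQ : Integrable QP μ := hQmem.integrable one_le_two
  have intT2 : Integrable (fun ω => T ω * T ω) μ := hT2mem.integrable one_le_two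
  have intQQ : Integrable (fun ω => QP ω * QP ω) μ := integrable_mul_L2 hQmem hQmem
  have intQT2 : Integrable (fun ω => QP ω * (T ω * T ω)) μ := integrable_mul_L2 hQmem hT2mem
  have intT4 : Integrable (fun ω => (T ω * T ω) * (T ω * T ω)) μ := integrable_mul_L2 hT2mem hT2mem
  have hT2v : ∫ ω, T ω * T ω ∂μ = n * s2 := by
    have e : ∫ ω, T ω * T ω ∂μ = ∫ ω, (T ω)^2 ∂μ :=
      integral_congr_ae (Filter.Eventually.of_forall fun ω => by ring)
    rw [e, hTm2, hcardU]
  have hT4v : ∫ ω, (T ω * T ω) * (T ω * T ω) ∂μ = n*k4 + 3*n*((n:ℝ)-1)*s2^2 := by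
    have e : ∫ ω, (T ω * T ω) * (T ω * T ω) ∂μ = ∫ ω, (T ω)^4 ∂μ :=
      integral_congr_ae (Filter.Eventually.of_forall fun ω => by ring)
    rw [e, hTm4, hcardU]
  have hsq : ∀ l : Fin n, ∫ ω, X l ω * X l ω ∂μ = s2 := fun l =>
    (integral_congr_ae (Filter.Eventually.of_forall fun ω => by ring)).trans (h2 l)
  have hEQ : ∫ ω, QP ω ∂μ = n * s2 := by
    have e : ∫ ω, QP ω ∂μ = ∑ i, ∫ ω, X i ω * X i ω ∂μ := by
      rw [integral_congr_ae (Filter.Eventually.of_forall hQapp)]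
      exact integral_finset_sum _ fun i _ =>
        integrable_mul_L2 (memLp_two_of_four (hX4 i)) (memLp_two_of_four (hX4 i))
    rw [e, Finset.sum_congr rfl fun i _ => hsq i]
    simp [Finset.sum_const, Finset.card_univ, nsmul_eq_mul]
  have hpair : ∀ i j : Fin n, i ≠ j →
      ∫ ω, (X i ω * X i ω) * (X j ω * X j ω) ∂μ = s2 * s2 := by
    intro i j hij
    have hI : IndepFun (fun ω => X i ω * X i ω) (fun ω => X j ω * X j ω) μ :=
      (hindX.indepFun hij).comp (measurable_id.mul measurable_id)
        (measurable_id.mul measurable_id)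
    have hmul := hI.integral_mul_eq_mul_integral ((hmeasX i).mul (hmeasX i)).aestronglyMeasurable
      ((hmeasX j).mul (hmeasX j)).aestronglyMeasurable
    calc ∫ ω, (X i ω * X i ω) * (X j ω * X j ω) ∂μ
        = (∫ ω, X i ω * X i ω ∂μ) * (∫ ω, X j ω * X j ω ∂μ) := by simpa using hmul
      _ = s2 * s2 := by rw [hsq i, hsq j]
  have hEQQ : ∫ ω, QP ω * QP ω ∂μ = n * (k4 + ((n:ℝ)-1) * s2^2) := by
    have e : ∀ ω, QP ω * QP ω = ∑ i, (X i ω * X i ω) * QP ω := fun ω => by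
      rw [← Finset.sum_mul, ← hQapp ω]
    rw [integral_congr_ae (Filter.Eventually.of_forall e),
      integral_finset_sum _ (fun i _ => integrable_mul_L2 (memLp_two_mul (hX4 i) (hX4 i)) hQmem)]
    have step : ∀ i : Fin n, ∫ ω, (X i ω * X i ω) * QP ω ∂μ = k4 + ((n:ℝ)-1)*s2^2 := by
      intro i
      have e2 : ∀ ω, (X i ω * X i ω) * QP ω = ∑ j, (X i ω * X i ω) * (X j ω * X j ω) := fun ω => by
        rw [hQapp ω, Finset.mul_sum]
      rw [integral_congr_ae (Filter.Eventually.of_forall e2),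
        integral_finset_sum _ (fun j _ => (integrable_monomial (hX4 i) (hX4 j) 2 2
          (by norm_num)).congr (Filter.Eventually.of_forall fun ω => by ring)),
        ← Finset.add_sum_erase Finset.univ _ (Finset.mem_univ i)]
      have hii : ∫ ω, (X i ω * X i ω) * (X i ω * X i ω) ∂μ = k4 :=
        (integral_congr_ae (Filter.Eventually.of_forall fun ω => by ring)).trans (h4 i)
      have hrest : ∑ j ∈ Finset.univ.erase i, ∫ ω, (X i ω * X i ω) * (X j ω * X j ω) ∂μ
          = ((n:ℝ)-1) * s2^2 := by
        rw [Finset.sum_congr rfl fun j hj => hpair i j (Finset.ne_of_mem_erase hj).symm,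
          Finset.sum_const, Finset.card_erase_of_mem (Finset.mem_univ i), Finset.card_univ,
          Fintype.card_fin, nsmul_eq_mul, Nat.cast_sub (by omega)]
        push_cast
        ring
      rw [hii, hrest]
    rw [Finset.sum_congr rfl fun i _ => step i]
    simp only [Finset.sum_const, Finset.card_univ, Fintype.card_fin, nsmul_eq_mul]
  have hEQT2 : ∫ ω, QP ω * (T ω * T ω) ∂μ = n * (k4 + ((n:ℝ)-1)*s2^2) := by
    have e : ∀ ω, QP ω * (T ω * T ω) = ∑ i, (X i ω * X i ω) * (T ω * T ω) := fun ω => by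
      rw [hQapp ω, Finset.sum_mul]
    rw [integral_congr_ae (Filter.Eventually.of_forall e),
      integral_finset_sum _ (fun i _ => (integrable_monomial (hX4 i) hTmem 2 2
        (by norm_num)).congr (Filter.Eventually.of_forall fun ω => by ring))]
    have step : ∀ i : Fin n, ∫ ω, (X i ω * X i ω) * (T ω * T ω) ∂μ = k4 + ((n:ℝ)-1)*s2^2 := by
      intro i
      obtain ⟨hR1, hR2, -, -⟩ := hmoms (Finset.univ.erase i)
      set R : Ω → ℝ := ∑ j ∈ Finset.univ.erase i, X j with hR
      have hTR : T = X i + R := by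
        rw [hT, hR]
        exact (Finset.add_sum_erase _ X (Finset.mem_univ i)).symm
      have hRmem : MemLp R 4 μ := memLp_finset_sum' _ (fun j _ => hX4 j)
      have hRmeas : Measurable R := by
        rw [hR, show (∑ j ∈ Finset.univ.erase i, X j)
            = fun ω => ∑ j ∈ Finset.univ.erase i, X j ω from
          funext fun ω => Finset.sum_apply _ _ _]
        exact Finset.measurable_sum _ fun j _ => hmeasX j
      have hind : IndepFun R (X i) μ :=
        hindX.indepFun_finset_sum_of_notMem hmeasX (Finset.notMem_erase i Finset.univ)
      have hprodR : ∀ p q : ℕ, ∫ ω, X i ω ^ p * R ω ^ q ∂μ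
          = (∫ ω, X i ω ^ p ∂μ) * ∫ ω, R ω ^ q ∂μ := by
        intro p q
        have h := (hind.symm.comp (measurable_id.pow_const p)
            (measurable_id.pow_const q)).integral_mul_eq_mul_integral
          ((hmeasX i).pow_const p).aestronglyMeasurable
          (hRmeas.pow_const q).aestronglyMeasurable
        simpa [Function.comp] using h
      have hcardE : ((Finset.univ.erase i).card : ℝ) = (n:ℝ) - 1 := by
        rw [Finset.card_erase_of_mem (Finset.mem_univ i), Finset.card_univ, Fintype.card_fin,
          Nat.cast_sub (by omega)]
        norm_num
      have e2 : ∀ ω, (X i ω * X i ω) * (T ω * T ω)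
          = X i ω^4 * R ω^0 + 2*(X i ω^3 * R ω^1) + X i ω^2 * R ω^2 := fun ω => by
        rw [show T ω = X i ω + R ω from by rw [hTR]; simp [Pi.add_apply]]
        ring
      have iA : Integrable (fun ω => X i ω^4 * R ω^0 + 2*(X i ω^3 * R ω^1)) μ :=
        (integrable_monomial (hX4 i) hRmem 4 0 (by norm_num)).add
          ((integrable_monomial (hX4 i) hRmem 3 1 (by norm_num)).const_mul 2)
      rw [integral_congr_ae (Filter.Eventually.of_forall e2),
        integral_add iA (integrable_monomial (hX4 i) hRmem 2 2 (by norm_num)),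
        integral_add (integrable_monomial (hX4 i) hRmem 4 0 (by norm_num))
          ((integrable_monomial (hX4 i) hRmem 3 1 (by norm_num)).const_mul 2),
        integral_const_mul, hprodR 4 0, hprodR 3 1, hprodR 2 2]
      simp only [pow_zero, pow_one, integral_const, probReal_univ, ENNReal.toReal_one,
        smul_eq_mul, mul_one, one_mul]
      rw [h4 i, h3 i, h2 i, hR1, hR2, hcardE]
      ring
    rw [Finset.sum_congr rfl fun i _ => step i]
    simp only [Finset.sum_const, Finset.card_univ, Fintype.card_fin, nsmul_eq_mul]
  set g : Ω → ℝ := fun ω => (1/((n:ℝ)-1)) * (QP ω - (1/(n:ℝ)) * (T ω * T ω)) with hg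
  have hgmem : MemLp g 2 μ := (hQmem.sub (hT2mem.const_mul (1/(n:ℝ)))).const_mul _
  have hEg : ∫ ω, g ω ∂μ = s2 := by
    simp only [hg]
    have iS0 : Integrable (fun ω => QP ω - (1/(n:ℝ))*(T ω * T ω)) μ :=
      intQ.sub (intT2.const_mul _)
    rw [integral_const_mul, integral_sub intQ (intT2.const_mul _), integral_const_mul,
      hEQ, hT2v]
    field_simp
  have hEg2 : ∫ ω, (g ω)^2 ∂μ = (1/((n:ℝ)-1))^2 * ((n*(k4+((n:ℝ)-1)*s2^2))
      - (2/(n:ℝ))*(n*(k4+((n:ℝ)-1)*s2^2)) + (1/(n:ℝ)^2)*(n*k4 + 3*n*((n:ℝ)-1)*s2^2)) := by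
    have e : ∀ ω, (g ω)^2 = (1/((n:ℝ)-1))^2 * ((QP ω*QP ω) - (2/(n:ℝ))*(QP ω*(T ω*T ω))
        + (1/(n:ℝ)^2)*((T ω*T ω)*(T ω*T ω))) := fun ω => by simp only [hg]; ring
    have iS : Integrable (fun ω => QP ω * QP ω - (2/(n:ℝ))*(QP ω*(T ω*T ω))) μ :=
      intQQ.sub (intQT2.const_mul _)
    rw [integral_congr_ae (Filter.Eventually.of_forall e), integral_const_mul,
      integral_add iS (intT4.const_mul _),
      integral_sub intQQ (intQT2.const_mul _), integral_const_mul, integral_const_mul,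
      hEQQ, hEQT2, hT4v]
  have hvarg : variance g μ ≤ k4 / n := by
    have e1 : μ[g^2] = ∫ ω, (g ω)^2 ∂μ :=
      integral_congr_ae (Filter.Eventually.of_forall fun ω => by simp)
    have hveq : variance g μ = k4/(n:ℝ) + s2^2 * (3 - (n:ℝ))/((n:ℝ)*((n:ℝ)-1)) := by
      rw [variance_eq_sub hgmem, e1, hEg2, hEg]
      field_simp
      ring
    rw [hveq]
    have hle : s2^2 * (3 - (n:ℝ))/((n:ℝ)*((n:ℝ)-1)) ≤ 0 := by
      apply div_nonpos_of_nonpos_of_nonneg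
      · exact mul_nonpos_of_nonneg_of_nonpos (sq_nonneg _) (by linarith)
      · nlinarith
    linarith
  have hpt : ∀ ω, (1 / ((n : ℝ) - 1)) *
      (∑ i, (Y i ω - (1 / (n : ℝ)) * ∑ j, Y j ω) ^ 2) = g ω := by
    intro ω
    have hTY : T ω = (∑ j, Y j ω) - n * m := by
      rw [hTapp ω]
      simp only [hXdef, Function.comp_apply]
      rw [Finset.sum_sub_distrib, Finset.sum_const, Finset.card_univ, Fintype.card_fin,
        nsmul_eq_mul]
    have hterm : ∀ i, Y i ω - (1/(n:ℝ)) * ∑ j, Y j ω = X i ω - (1/(n:ℝ)) * T ω := by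
      intro i
      simp only [hXdef, Function.comp_apply]
      rw [hTY]
      field_simp
      ring
    rw [Finset.sum_congr rfl fun i _ => by rw [hterm i]]
    have expand : ∑ i, (X i ω - (1/(n:ℝ))*T ω)^2 = QP ω - (1/(n:ℝ))*(T ω * T ω) := by
      have e : ∀ i : Fin n, (X i ω - (1/(n:ℝ))*T ω)^2
          = X i ω * X i ω - (2*((1/(n:ℝ))*T ω))*X i ω + ((1/(n:ℝ))*T ω)^2 := fun i => by ring
      rw [Finset.sum_congr rfl fun i _ => e i, Finset.sum_add_distrib,
        Finset.sum_sub_distrib, ← Finset.mul_sum, Finset.sum_const, Finset.card_univ,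
        Fintype.card_fin, nsmul_eq_mul, ← hTapp ω, ← hQapp ω]
      field_simp
      try ring
    rw [expand]
    try simp only [hg]
  have hset : {ω | δ ≤ |(1 / ((n : ℝ) - 1)) *
        (∑ i, (Y i ω - (1 / (n : ℝ)) * ∑ j, Y j ω) ^ 2) - s2|}
      = {ω | δ ≤ |g ω - ∫ x, g x ∂μ|} := by
    ext ω
    simp only [Set.mem_setOf_eq, hpt ω, hEg]
  rw [hset]
  refine (meas_ge_le_variance_div_sq hgmem hδ).trans (ENNReal.ofReal_le_ofReal ?_)
  have hδ2 : (0:ℝ) < δ^2 := by positivity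
  calc variance g μ / δ^2 ≤ (k4/(n:ℝ)) / δ^2 := by gcongr
    _ = κ * s2^2 / (δ^2 * n) := by rw [← hκk, div_div, mul_comm (n:ℝ) (δ^2)]
end
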